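/- Let k be a field and A = k[X_1,…,X_m,Y,Z,T]/(αY − f(Z,T) − h) an integral domain with f(Z,T) ≠ 0, α ∉ k, and every prime factor of α dividing h. If A is a UFD, then f(Z,T) is either an irreducible element of k[Z,T] or a unit (an element of k^*). -/

import Mathlib

set_option maxHeartbeats 1000000
set_option synthInstance.maxHeartbeats 400000

noncomputable section
open MvPolynomial

/-- The polynomial `H = α(X_1,…,X_m)·Y - f(Z,T) - h(X_1,…,X_m,Z,T)` inside
`k[X_1,…,X_m][Y,Z,T]` (variable `0` of `Fin 3` is `Y`, variables `1, 2` are `Z, T`). -/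
def HH (k : Type) [Field k] (m : ℕ) (α : MvPolynomial (Fin m) k)
    (f : MvPolynomial (Fin 2) k) (h : MvPolynomial (Fin 2) (MvPolynomial (Fin m) k)) :
    MvPolynomial (Fin 3) (MvPolynomial (Fin m) k) :=
  MvPolynomial.C α * MvPolynomial.X 0
    - rename Fin.succ (MvPolynomial.map (algebraMap k (MvPolynomial (Fin m) k)) f)
    - rename Fin.succ h

/-- The affine domain `A = k[X_1,…,X_m,Y,Z,T]/(αY - f(Z,T) - h)`. -/
def Aring (k : Type) [Field k] (m : ℕ) (α : MvPolynomial (Fin m) k)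
    (f : MvPolynomial (Fin 2) k) (h : MvPolynomial (Fin 2) (MvPolynomial (Fin m) k)) : Type :=
  MvPolynomial (Fin 3) (MvPolynomial (Fin m) k) ⧸ Ideal.span {HH k m α f h}

instance (k : Type) [Field k] (m : ℕ) (α : MvPolynomial (Fin m) k)
    (f : MvPolynomial (Fin 2) k) (h : MvPolynomial (Fin 2) (MvPolynomial (Fin m) k)) :
    CommRing (Aring k m α f h) := inferInstanceAs (CommRing (_ ⧸ _))

instance (k : Type) [Field k] (m : ℕ) (α : MvPolynomial (Fin m) k)
    (f : MvPolynomial (Fin 2) k) (h : MvPolynomial (Fin 2) (MvPolynomial (Fin m) k)) :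
    Algebra (MvPolynomial (Fin m) k) (Aring k m α f h) :=
  inferInstanceAs (Algebra _ (_ ⧸ _))

instance (k : Type) [Field k] (m : ℕ) (α : MvPolynomial (Fin m) k)
    (f : MvPolynomial (Fin 2) k) (h : MvPolynomial (Fin 2) (MvPolynomial (Fin m) k)) :
    Algebra k (Aring k m α f h) := inferInstanceAs (Algebra _ (_ ⧸ _))

namespace Stmt5Aux

/-! ### Generic helper lemmas -/

lemma poly_const_of_mul_const {R : Type*} [CommRing R] [IsDomain R] {p q : Polynomial R} {a : R}
    (hpq : p * q = Polynomial.C a) (ha : a ≠ 0) :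
    ∃ b c : R, p = Polynomial.C b ∧ q = Polynomial.C c ∧ b * c = a := by
  have hCa : (Polynomial.C a : Polynomial R) ≠ 0 := by simpa using ha
  have hp : p ≠ 0 := by rintro rfl; rw [zero_mul] at hpq; exact hCa hpq.symm
  have hq : q ≠ 0 := by rintro rfl; rw [mul_zero] at hpq; exact hCa hpq.symm
  have hdeg := Polynomial.natDegree_mul hp hq
  rw [hpq, Polynomial.natDegree_C] at hdeg
  obtain ⟨b, hb⟩ := Polynomial.natDegree_eq_zero.mp (Nat.eq_zero_of_add_eq_zero_right hdeg.symm)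
  obtain ⟨c, hc⟩ := Polynomial.natDegree_eq_zero.mp (Nat.eq_zero_of_add_eq_zero_left hdeg.symm)
  refine ⟨b, c, hb.symm, hc.symm, ?_⟩
  have : Polynomial.C (b * c) = Polynomial.C a := by rw [map_mul, hb, hc, hpq]
  exact Polynomial.C_injective this

lemma finSuccEquiv_C' {R : Type*} [CommRing R] (n : ℕ) (r : R) :
    (finSuccEquiv R n) (MvPolynomial.C r) = Polynomial.C (MvPolynomial.C r) := by
  simp [finSuccEquiv_apply]

lemma finSuccEquiv_rename_succ {R : Type*} [CommRing R] (n : ℕ) (g : MvPolynomial (Fin n) R) :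
    (finSuccEquiv R n) (rename Fin.succ g) = Polynomial.C g := by
  induction g using MvPolynomial.induction_on with
  | C r => rw [rename_C, finSuccEquiv_C']
  | add p q hp hq => rw [map_add, map_add, hp, hq, map_add]
  | mul_X p i hp => rw [map_mul, map_mul, hp, rename_X, finSuccEquiv_X_succ, ← map_mul]

lemma mv_const_of_mul_const {R : Type*} [CommRing R] [IsDomain R] :
    ∀ (n : ℕ) {p q : MvPolynomial (Fin n) R} {a : R},
      p * q = MvPolynomial.C a → a ≠ 0 →
      ∃ b c : R, p = MvPolynomial.C b ∧ q = MvPolynomial.C c ∧ b * c = a := by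
  intro n
  induction n with
  | zero =>
    intro p q a hpq ha
    refine ⟨p.coeff 0, q.coeff 0, eq_C_of_isEmpty p, eq_C_of_isEmpty q, ?_⟩
    have : MvPolynomial.C (p.coeff 0 * q.coeff 0) = (MvPolynomial.C a : MvPolynomial (Fin 0) R) := by
      rw [map_mul, ← eq_C_of_isEmpty p, ← eq_C_of_isEmpty q, hpq]
    exact (MvPolynomial.C_injective _ R) this
  | succ n ih =>
    intro p q a hpq ha
    have h1 : (finSuccEquiv R n) p * (finSuccEquiv R n) q
        = Polynomial.C (MvPolynomial.C a) := by
      rw [← map_mul, hpq, finSuccEquiv_C']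
    have hCa : (MvPolynomial.C a : MvPolynomial (Fin n) R) ≠ 0 := by simpa using ha
    obtain ⟨b', c', hb', hc', hbc'⟩ := poly_const_of_mul_const h1 hCa
    obtain ⟨b, c, hb, hc, hbc⟩ := ih hbc' ha
    subst hb hc
    refine ⟨b, c, ?_, ?_, hbc⟩
    · have h2 := congrArg (finSuccEquiv R n).symm hb'
      rw [AlgEquiv.symm_apply_apply] at h2
      rw [h2, ← finSuccEquiv_C', AlgEquiv.symm_apply_apply]
    · have h2 := congrArg (finSuccEquiv R n).symm hc'
      rw [AlgEquiv.symm_apply_apply] at h2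
      rw [h2, ← finSuccEquiv_C', AlgEquiv.symm_apply_apply]

lemma eq_C_of_map_eq_C {k : Type} [Field k] {T : Type*} [CommRing T] (φ : k →+* T)
    (hφ : Function.Injective φ) {g : MvPolynomial (Fin 2) k} {b : T}
    (hg : MvPolynomial.map φ g = MvPolynomial.C b) : ∃ c : k, g = MvPolynomial.C c := by
  refine ⟨g.coeff 0, MvPolynomial.ext _ _ fun mo => ?_⟩
  rw [MvPolynomial.coeff_C]
  split_ifs with hm
  · rw [← hm]
  · have h2 := congrArg (MvPolynomial.coeff mo) hg
    rw [MvPolynomial.coeff_map, MvPolynomial.coeff_C, if_neg hm] at h2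
    apply hφ; rw [map_zero, h2]

/-! ### The main setting -/

section Main

variable (k : Type) [Field k] (m : ℕ) (α : MvPolynomial (Fin m) k)
    (f : MvPolynomial (Fin 2) k) (h : MvPolynomial (Fin 2) (MvPolynomial (Fin m) k))

local notation "R" => MvPolynomial (Fin m) k
local notation "S" => MvPolynomial (Fin 2) (MvPolynomial (Fin m) k)
local notation "B" => MvPolynomial (Fin 3) (MvPolynomial (Fin m) k)

/-- The quotient map onto `A`. -/
def toA : MvPolynomial (Fin 3) (MvPolynomial (Fin m) k) →+* Aring k m α f h :=
  Ideal.Quotient.mk (Ideal.span {HH k m α f h})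

lemma toA_surjective : Function.Surjective (toA k m α f h) :=
  fun x => Ideal.Quotient.mk_surjective x

lemma toA_eq_iff {g₁ g₂ : B} :
    toA k m α f h g₁ = toA k m α f h g₂ ↔ HH k m α f h ∣ (g₁ - g₂) :=
  (Ideal.Quotient.eq).trans Ideal.mem_span_singleton

lemma toA_eq_zero_iff {g : B} : toA k m α f h g = 0 ↔ HH k m α f h ∣ g :=
  (Ideal.Quotient.eq_zero_iff_mem).trans Ideal.mem_span_singleton

/-- The image of `HH` under `finSuccEquiv`. -/
lemma eHH :
    (finSuccEquiv (MvPolynomial (Fin m) k) 2) (HH k m α f h)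
      = Polynomial.C (MvPolynomial.C α) * Polynomial.X
        - Polynomial.C (MvPolynomial.map (algebraMap k (MvPolynomial (Fin m) k)) f + h) := by
  rw [HH, map_sub, map_sub, map_mul, finSuccEquiv_C', finSuccEquiv_X_zero,
    finSuccEquiv_rename_succ, finSuccEquiv_rename_succ, map_add]
  ring

lemma natDegree_eHH (hα0 : α ≠ 0) :
    ((finSuccEquiv (MvPolynomial (Fin m) k) 2) (HH k m α f h)).natDegree = 1 := by
  rw [eHH]
  have h1 : Polynomial.C (MvPolynomial.C α) * Polynomial.X
        - Polynomial.C (MvPolynomial.map (algebraMap k (MvPolynomial (Fin m) k)) f + h)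
      = Polynomial.C (MvPolynomial.C α) * Polynomial.X
        + Polynomial.C (-(MvPolynomial.map (algebraMap k (MvPolynomial (Fin m) k)) f + h)) := by
    rw [map_neg]; ring
  rw [h1]
  exact Polynomial.natDegree_linear (by simpa using hα0)

lemma eHH_ne_zero (hα0 : α ≠ 0) :
    (finSuccEquiv (MvPolynomial (Fin m) k) 2) (HH k m α f h) ≠ 0 := by
  intro h0
  have := natDegree_eHH k m α f h hα0
  rw [h0] at this
  simp at this

/-- Constants from `S = k[X][Z,T]` inject into `A`. -/
lemma constant_eq_zero (hα0 : α ≠ 0) {s : S}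
    (hs : toA k m α f h (rename Fin.succ s) = 0) : s = 0 := by
  obtain ⟨c, hc⟩ := (toA_eq_zero_iff k m α f h).mp hs
  have h2 := congrArg (finSuccEquiv (MvPolynomial (Fin m) k) 2) hc
  rw [finSuccEquiv_rename_succ, map_mul] at h2
  by_cases hc0 : (finSuccEquiv (MvPolynomial (Fin m) k) 2) c = 0
  · rw [hc0, mul_zero] at h2
    simpa using h2
  · exfalso
    have hd := Polynomial.natDegree_mul (eHH_ne_zero k m α f h hα0) hc0
    rw [← h2, Polynomial.natDegree_C, natDegree_eHH k m α f h hα0] at hd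
    omega

lemma constant_inj (hα0 : α ≠ 0) {s t : S}
    (hs : toA k m α f h (rename Fin.succ s) = toA k m α f h (rename Fin.succ t)) : s = t := by
  have h1 : toA k m α f h (rename Fin.succ (s - t)) = 0 := by
    rw [map_sub, map_sub, hs, sub_self]
  have := constant_eq_zero k m α f h hα0 h1
  exact sub_eq_zero.mp this

lemma constR_eq_zero (hα0 : α ≠ 0) {r : R}
    (hs : toA k m α f h (MvPolynomial.C r) = 0) : r = 0 := by
  have h1 : toA k m α f h (rename Fin.succ (MvPolynomial.C r)) = 0 := by
    rwa [rename_C]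
  simpa using constant_eq_zero k m α f h hα0 h1

lemma constR_inj (hα0 : α ≠ 0) {r t : R}
    (hs : toA k m α f h (MvPolynomial.C r) = toA k m α f h (MvPolynomial.C t)) : r = t := by
  have h1 : toA k m α f h (MvPolynomial.C (r - t)) = 0 := by
    rw [map_sub, map_sub, hs, sub_self]
  have := constR_eq_zero k m α f h hα0 h1
  exact sub_eq_zero.mp this

/-- The defining relation. -/
lemma key_rel :
    toA k m α f h (rename Fin.succ
        (MvPolynomial.map (algebraMap k (MvPolynomial (Fin m) k)) f + h))
      = toA k m α f h (MvPolynomial.C α * MvPolynomial.X 0) := by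
  rw [toA_eq_iff]
  refine ⟨-1, ?_⟩
  rw [HH, map_add]
  ring

/-- Every element of `A` becomes an `S`-constant after multiplication by a power of `α`. -/
lemma power_constant (x : Aring k m α f h) :
    ∃ (n : ℕ) (s : S), toA k m α f h (rename Fin.succ s)
      = (toA k m α f h (MvPolynomial.C α)) ^ n * x := by
  obtain ⟨g, rfl⟩ := toA_surjective k m α f h x
  induction g using MvPolynomial.induction_on with
  | C r => exact ⟨0, MvPolynomial.C r, by rw [rename_C, pow_zero, one_mul]⟩
  | add p q hp hq =>
    obtain ⟨n₁, s₁, e₁⟩ := hp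
    obtain ⟨n₂, s₂, e₂⟩ := hq
    refine ⟨n₁ + n₂, (MvPolynomial.C α) ^ n₂ * s₁ + (MvPolynomial.C α) ^ n₁ * s₂, ?_⟩
    simp only [map_add, map_mul, map_pow, rename_C, e₁, e₂]
    ring
  | mul_X p i hp =>
    obtain ⟨n, s, e⟩ := hp
    rcases Fin.eq_zero_or_eq_succ i with rfl | ⟨j, rfl⟩
    · refine ⟨n + 1, s * (MvPolynomial.map (algebraMap k (MvPolynomial (Fin m) k)) f + h), ?_⟩
      have hk := key_rel k m α f h
      calc toA k m α f h (rename Fin.succ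
              (s * (MvPolynomial.map (algebraMap k (MvPolynomial (Fin m) k)) f + h)))
          = toA k m α f h (rename Fin.succ s) * toA k m α f h (rename Fin.succ
              (MvPolynomial.map (algebraMap k (MvPolynomial (Fin m) k)) f + h)) := by
            rw [map_mul, map_mul]
        _ = ((toA k m α f h (MvPolynomial.C α)) ^ n * toA k m α f h p)
              * toA k m α f h (MvPolynomial.C α * MvPolynomial.X 0) := by rw [e, hk]
        _ = (toA k m α f h (MvPolynomial.C α)) ^ (n + 1)
              * toA k m α f h (p * MvPolynomial.X 0) := by
            rw [map_mul, map_mul]; ring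
    · refine ⟨n, s * MvPolynomial.X j, ?_⟩
      calc toA k m α f h (rename Fin.succ (s * MvPolynomial.X j))
          = toA k m α f h (rename Fin.succ s) * toA k m α f h (MvPolynomial.X j.succ) := by
            rw [map_mul, map_mul, rename_X]
        _ = (toA k m α f h (MvPolynomial.C α)) ^ n * toA k m α f h p
              * toA k m α f h (MvPolynomial.X j.succ) := by rw [e]
        _ = (toA k m α f h (MvPolynomial.C α)) ^ n
              * toA k m α f h (p * MvPolynomial.X j.succ) := by
            rw [map_mul]; ring

lemma map_HH {q : MvPolynomial (Fin m) k} (hqα : q ∣ α) {h₂ : S}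
    (hh₂ : h = MvPolynomial.C q * h₂) :
    MvPolynomial.map (Ideal.Quotient.mk (Ideal.span {q})) (HH k m α f h)
      = - rename Fin.succ (MvPolynomial.map
          ((Ideal.Quotient.mk (Ideal.span {q})).comp
            (algebraMap k (MvPolynomial (Fin m) k))) f) := by
  have hα0 : Ideal.Quotient.mk (Ideal.span {q}) α = 0 := by
    rw [Ideal.Quotient.eq_zero_iff_mem]; exact Ideal.mem_span_singleton.mpr hqα
  have hq0 : Ideal.Quotient.mk (Ideal.span {q}) q = 0 := by
    rw [Ideal.Quotient.eq_zero_iff_mem]; exact Ideal.mem_span_singleton.mpr dvd_rfl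
  rw [HH, hh₂, map_sub, map_sub, map_mul, MvPolynomial.map_C, hα0,
    MvPolynomial.map_rename, MvPolynomial.map_rename, MvPolynomial.map_map,
    map_mul, MvPolynomial.map_C, hq0]
  simp

/-- Key divisibility transfer: if `C γ * x` is an `R`-constant in `A` and all prime factors of
`γ` divide `α`, then `γ` divides that constant in `R`. -/
lemma claimC (hα0 : α ≠ 0) (hf0 : f ≠ 0) (hfu : ¬ IsUnit f)
    (hdiv : ∀ p : MvPolynomial (Fin m) k, Prime p → p ∣ α → MvPolynomial.C p ∣ h)
    [IsDomain (Aring k m α f h)] (γ : MvPolynomial (Fin m) k) :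
    (∃ N : ℕ, γ ∣ α ^ N) → ∀ (a : MvPolynomial (Fin m) k) (x : Aring k m α f h),
      toA k m α f h (MvPolynomial.C γ) * x = toA k m α f h (MvPolynomial.C a) → γ ∣ a := by
  induction γ using WfDvdMonoid.induction_on_irreducible with
  | zero =>
    rintro ⟨N, hN⟩
    exact absurd ((pow_eq_zero_iff'.mp (zero_dvd_iff.mp hN)).1) hα0
  | unit u hu' => exact fun _ _ _ _ => hu'.dvd
  | mul γ' q hγ'0 hqi ih =>
    rintro ⟨N, hγN⟩ a x hx
    have hq : Prime q := UniqueFactorizationMonoid.irreducible_iff_prime.mp hqi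
    have hqα : q ∣ α := hq.dvd_of_dvd_pow (dvd_trans (dvd_mul_right q γ') hγN)
    obtain ⟨h₂, hh₂⟩ := hdiv q hq hqα
    obtain ⟨g, rfl⟩ := toA_surjective k m α f h x
    have hmem : HH k m α f h ∣ (MvPolynomial.C (q * γ') * g - MvPolynomial.C a) := by
      rw [← toA_eq_iff, map_mul]; exact hx
    obtain ⟨c, hc⟩ := hmem
    haveI hsp : (Ideal.span {q}).IsPrime := (Ideal.span_singleton_prime hq.ne_zero).mpr hq
    have hqa : q ∣ a := by
      rw [← Ideal.mem_span_singleton, ← Ideal.Quotient.eq_zero_iff_mem]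
      by_contra hab
      have h3 := congrArg (MvPolynomial.map (Ideal.Quotient.mk (Ideal.span {q}))) hc
      have h4 : Ideal.Quotient.mk (Ideal.span {q}) (q * γ') = 0 := by
        rw [Ideal.Quotient.eq_zero_iff_mem]
        exact Ideal.mem_span_singleton.mpr (dvd_mul_right q γ')
      rw [map_sub, map_mul, MvPolynomial.map_C, MvPolynomial.map_C, h4, map_mul,
        map_HH k m α f h hqα hh₂, map_zero, zero_mul] at h3
      erw [zero_sub] at h3
      have h5 : (MvPolynomial.C (Ideal.Quotient.mk (Ideal.span {q}) a) :
            MvPolynomial (Fin 3) ((MvPolynomial (Fin m) k) ⧸ Ideal.span {q}))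
          = rename Fin.succ (MvPolynomial.map ((Ideal.Quotient.mk (Ideal.span {q})).comp
              (algebraMap k (MvPolynomial (Fin m) k))) f)
            * MvPolynomial.map (Ideal.Quotient.mk (Ideal.span {q})) c := by
        linear_combination -h3
      have h6 := congrArg (finSuccEquiv ((MvPolynomial (Fin m) k) ⧸ Ideal.span {q}) 2) h5
      rw [map_mul, finSuccEquiv_C', finSuccEquiv_rename_succ] at h6
      have hCa : (MvPolynomial.C (Ideal.Quotient.mk (Ideal.span {q}) a) :
          MvPolynomial (Fin 2) ((MvPolynomial (Fin m) k) ⧸ Ideal.span {q})) ≠ 0 := by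
        simpa using hab
      obtain ⟨b, c', hb, hc', hbc⟩ := poly_const_of_mul_const h6.symm hCa
      have hbf : MvPolynomial.map ((Ideal.Quotient.mk (Ideal.span {q})).comp
          (algebraMap k (MvPolynomial (Fin m) k))) f = b := Polynomial.C_injective hb
      rw [← hbf] at hbc
      obtain ⟨b₂, c₂, hfb, -, -⟩ := mv_const_of_mul_const 2 hbc hab
      have hinj : Function.Injective ((Ideal.Quotient.mk (Ideal.span {q})).comp
          (algebraMap k (MvPolynomial (Fin m) k))) := RingHom.injective _
      obtain ⟨c₀, hc₀⟩ := eq_C_of_map_eq_C _ hinj hfb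
      have hc00 : c₀ ≠ 0 := by rintro rfl; rw [map_zero] at hc₀; exact hf0 hc₀
      exact hfu (hc₀ ▸ (isUnit_iff_ne_zero.mpr hc00).map
        (MvPolynomial.C : k →+* MvPolynomial (Fin 2) k))
    obtain ⟨a', rfl⟩ := hqa
    have hq0 : toA k m α f h (MvPolynomial.C q) ≠ 0 := fun h0 =>
      hq.ne_zero (constR_eq_zero k m α f h hα0 h0)
    have h7 : toA k m α f h (MvPolynomial.C q)
          * (toA k m α f h (MvPolynomial.C γ') * toA k m α f h g)
        = toA k m α f h (MvPolynomial.C q) * toA k m α f h (MvPolynomial.C a') := by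
      calc toA k m α f h (MvPolynomial.C q)
            * (toA k m α f h (MvPolynomial.C γ') * toA k m α f h g)
          = toA k m α f h (MvPolynomial.C (q * γ')) * toA k m α f h g := by
            rw [map_mul, map_mul]; ring
        _ = toA k m α f h (MvPolynomial.C (q * a')) := hx
        _ = toA k m α f h (MvPolynomial.C q) * toA k m α f h (MvPolynomial.C a') := by
            rw [map_mul, map_mul]
    have h8 := mul_left_cancel₀ hq0 h7
    have := ih ⟨N, dvd_trans (dvd_mul_left γ' q) hγN⟩ a' (toA k m α f h g) h8
    exact mul_dvd_mul_left q this

lemma prime_p (hα0 : α ≠ 0) (hf0 : f ≠ 0) (hfu : ¬ IsUnit f)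
    (hdiv : ∀ p : MvPolynomial (Fin m) k, Prime p → p ∣ α → MvPolynomial.C p ∣ h)
    [IsDomain (Aring k m α f h)]
    (hufd : UniqueFactorizationMonoid (Aring k m α f h))
    {p : MvPolynomial (Fin m) k} (hp : Prime p) (hpα : p ∣ α) :
    Prime (toA k m α f h (MvPolynomial.C p)) := by
  haveI := hufd
  rw [← UniqueFactorizationMonoid.irreducible_iff_prime]
  constructor
  · intro hun
    obtain ⟨x, hx⟩ := hun.exists_right_inv
    have h1 : toA k m α f h (MvPolynomial.C p) * x = toA k m α f h (MvPolynomial.C 1) := by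
      rw [map_one, map_one]; exact hx
    have := claimC k m α f h hα0 hf0 hfu hdiv p ⟨1, by rwa [pow_one]⟩ 1 x h1
    exact hp.not_unit (isUnit_of_dvd_one this)
  · intro u v huv
    obtain ⟨n₁, s₁, e₁⟩ := power_constant k m α f h u
    obtain ⟨n₂, s₂, e₂⟩ := power_constant k m α f h v
    have hmul : toA k m α f h (rename Fin.succ (s₁ * s₂))
        = toA k m α f h (rename Fin.succ
            ((MvPolynomial.C α) ^ (n₁ + n₂) * MvPolynomial.C p)) := by
      rw [map_mul, map_mul, e₁, e₂, map_mul, map_pow, rename_C, rename_C, map_mul, map_pow,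
        huv]
      ring
    have hS := constant_inj k m α f h hα0 hmul
    have hS' : s₁ * s₂ = MvPolynomial.C (α ^ (n₁ + n₂) * p) := by
      rw [hS, map_mul, map_pow]
    have hne : α ^ (n₁ + n₂) * p ≠ 0 := mul_ne_zero (pow_ne_zero _ hα0) hp.ne_zero
    obtain ⟨a₁, a₂, rfl, rfl, -⟩ := mv_const_of_mul_const 2 hS' hne
    have hu1 : toA k m α f h (MvPolynomial.C (α ^ n₁)) * u
        = toA k m α f h (MvPolynomial.C a₁) := by
      have hpw : toA k m α f h (MvPolynomial.C (α ^ n₁))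
          = (toA k m α f h (MvPolynomial.C α)) ^ n₁ := by rw [map_pow, map_pow]
      rw [hpw, ← e₁, rename_C]
    obtain ⟨b₁, rfl⟩ := claimC k m α f h hα0 hf0 hfu hdiv (α ^ n₁) ⟨n₁, dvd_rfl⟩ a₁ u hu1
    have hz₁ : toA k m α f h (MvPolynomial.C (α ^ n₁)) ≠ 0 := fun h0 =>
      (pow_ne_zero n₁ hα0) (constR_eq_zero k m α f h hα0 h0)
    have hu' : u = toA k m α f h (MvPolynomial.C b₁) := by
      apply mul_left_cancel₀ hz₁
      rw [hu1, map_mul, map_mul]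
    have hv1 : toA k m α f h (MvPolynomial.C (α ^ n₂)) * v
        = toA k m α f h (MvPolynomial.C a₂) := by
      have hpw : toA k m α f h (MvPolynomial.C (α ^ n₂))
          = (toA k m α f h (MvPolynomial.C α)) ^ n₂ := by rw [map_pow, map_pow]
      rw [hpw, ← e₂, rename_C]
    obtain ⟨b₂, rfl⟩ := claimC k m α f h hα0 hf0 hfu hdiv (α ^ n₂) ⟨n₂, dvd_rfl⟩ a₂ v hv1
    have hz₂ : toA k m α f h (MvPolynomial.C (α ^ n₂)) ≠ 0 := fun h0 =>
      (pow_ne_zero n₂ hα0) (constR_eq_zero k m α f h hα0 h0)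
    have hv' : v = toA k m α f h (MvPolynomial.C b₂) := by
      apply mul_left_cancel₀ hz₂
      rw [hv1, map_mul, map_mul]
    have hb : b₁ * b₂ = p := by
      apply constR_inj k m α f h hα0
      rw [map_mul, map_mul, ← hu', ← hv']
      exact huv.symm
    rcases hp.irreducible.isUnit_or_isUnit hb.symm with h1 | h1
    · exact Or.inl (hu' ▸ h1.map ((toA k m α f h).comp
        (MvPolynomial.C : MvPolynomial (Fin m) k →+* MvPolynomial (Fin 3) (MvPolynomial (Fin m) k))))
    · exact Or.inr (hv' ▸ h1.map ((toA k m α f h).comp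
        (MvPolynomial.C : MvPolynomial (Fin m) k →+* MvPolynomial (Fin 3) (MvPolynomial (Fin m) k))))

attribute [-instance] Ideal.Quotient.commSemiring Ideal.Quotient.semiring

lemma unit_of_dvd (hα0 : α ≠ 0) (hf0 : f ≠ 0)
    (hdiv : ∀ p : MvPolynomial (Fin m) k, Prime p → p ∣ α → MvPolynomial.C p ∣ h)
    [IsDomain (Aring k m α f h)]
    {p : MvPolynomial (Fin m) k} (hp : Prime p) (hpα : p ∣ α)
    {g₁ g₂ : MvPolynomial (Fin 2) k} (hfg : f = g₁ * g₂)
    (hdvd : toA k m α f h (MvPolynomial.C p)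
      ∣ toA k m α f h (rename Fin.succ
          (MvPolynomial.map (algebraMap k (MvPolynomial (Fin m) k)) g₁))) : IsUnit g₂ := by
  obtain ⟨h₂, hh₂⟩ := hdiv p hp hpα
  obtain ⟨t, ht⟩ := hdvd
  obtain ⟨c, rfl⟩ := toA_surjective k m α f h t
  have hmem : HH k m α f h
      ∣ (rename Fin.succ (MvPolynomial.map (algebraMap k (MvPolynomial (Fin m) k)) g₁)
          - MvPolynomial.C p * c) := by
    rw [← toA_eq_iff, map_mul]; exact ht
  obtain ⟨e, he⟩ := hmem
  haveI hsp : (Ideal.span {p}).IsPrime := (Ideal.span_singleton_prime hp.ne_zero).mpr hp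
  have hp0 : Ideal.Quotient.mk (Ideal.span {p}) p = 0 := by
    rw [Ideal.Quotient.eq_zero_iff_mem]; exact Ideal.mem_span_singleton.mpr dvd_rfl
  have h3 := congrArg (MvPolynomial.map (Ideal.Quotient.mk (Ideal.span {p}))) he
  rw [map_sub, MvPolynomial.map_rename, MvPolynomial.map_map, map_mul, MvPolynomial.map_C,
    hp0, map_mul, map_HH k m α f h hpα hh₂, map_zero, zero_mul] at h3
  erw [sub_zero] at h3
  have h6 := congrArg
    (finSuccEquiv ((MvPolynomial (Fin m) k) ⧸ Ideal.span {p}) 2) h3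
  rw [finSuccEquiv_rename_succ, map_mul, map_neg, finSuccEquiv_rename_succ] at h6
  have hff : MvPolynomial.map ((Ideal.Quotient.mk (Ideal.span {p})).comp
        (algebraMap k (MvPolynomial (Fin m) k))) f
      = MvPolynomial.map ((Ideal.Quotient.mk (Ideal.span {p})).comp
          (algebraMap k (MvPolynomial (Fin m) k))) g₁
        * MvPolynomial.map ((Ideal.Quotient.mk (Ideal.span {p})).comp
            (algebraMap k (MvPolynomial (Fin m) k))) g₂ := by
      rw [hfg, map_mul]
  rw [hff, map_mul] at h6
  have hinj : Function.Injective ((Ideal.Quotient.mk (Ideal.span {p})).comp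
      (algebraMap k (MvPolynomial (Fin m) k))) := RingHom.injective _
  have hg10 : g₁ ≠ 0 := by rintro rfl; rw [zero_mul] at hfg; exact hf0 hfg
  have hg1bar : MvPolynomial.map ((Ideal.Quotient.mk (Ideal.span {p})).comp
      (algebraMap k (MvPolynomial (Fin m) k))) g₁ ≠ 0 := fun h0 => by
    apply hg10
    apply MvPolynomial.map_injective _ hinj
    rw [h0, map_zero]
  have hz1 : Polynomial.C (MvPolynomial.map ((Ideal.Quotient.mk (Ideal.span {p})).comp
        (algebraMap k (MvPolynomial (Fin m) k))) g₁)
      * (1 + Polynomial.C (MvPolynomial.map ((Ideal.Quotient.mk (Ideal.span {p})).comp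
          (algebraMap k (MvPolynomial (Fin m) k))) g₂)
        * (finSuccEquiv ((MvPolynomial (Fin m) k) ⧸ Ideal.span {p}) 2)
            (MvPolynomial.map (Ideal.Quotient.mk (Ideal.span {p})) e)) = 0 := by
    linear_combination h6
  have hz : (1 : Polynomial (MvPolynomial (Fin 2) ((MvPolynomial (Fin m) k) ⧸ Ideal.span {p})))
      + Polynomial.C (MvPolynomial.map ((Ideal.Quotient.mk (Ideal.span {p})).comp
          (algebraMap k (MvPolynomial (Fin m) k))) g₂)
        * (finSuccEquiv ((MvPolynomial (Fin m) k) ⧸ Ideal.span {p}) 2)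
            (MvPolynomial.map (Ideal.Quotient.mk (Ideal.span {p})) e) = 0 :=
    (mul_eq_zero.mp hz1).resolve_left (by simpa using hg1bar)
  have key : Polynomial.C (MvPolynomial.map ((Ideal.Quotient.mk (Ideal.span {p})).comp
        (algebraMap k (MvPolynomial (Fin m) k))) g₂)
      * (- (finSuccEquiv ((MvPolynomial (Fin m) k) ⧸ Ideal.span {p}) 2)
          (MvPolynomial.map (Ideal.Quotient.mk (Ideal.span {p})) e))
      = Polynomial.C (MvPolynomial.C (1 : (MvPolynomial (Fin m) k) ⧸ Ideal.span {p})) := by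
    rw [MvPolynomial.C_1, Polynomial.C_1]
    linear_combination -hz
  obtain ⟨b, c', hb, -, hbc⟩ := poly_const_of_mul_const key one_ne_zero
  have hbb : MvPolynomial.map ((Ideal.Quotient.mk (Ideal.span {p})).comp
      (algebraMap k (MvPolynomial (Fin m) k))) g₂ = b := Polynomial.C_injective hb
  rw [← hbb] at hbc
  have hbc' : MvPolynomial.map ((Ideal.Quotient.mk (Ideal.span {p})).comp
        (algebraMap k (MvPolynomial (Fin m) k))) g₂ * c'
      = MvPolynomial.C (1 : (MvPolynomial (Fin m) k) ⧸ Ideal.span {p}) := by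
    rw [MvPolynomial.C_1]; exact hbc
  obtain ⟨b₂, c₂, hfb, -, -⟩ := mv_const_of_mul_const 2 hbc' one_ne_zero
  obtain ⟨c₀, hc₀⟩ := eq_C_of_map_eq_C _ hinj hfb
  have hg20 : g₂ ≠ 0 := by rintro rfl; rw [mul_zero] at hfg; exact hf0 hfg
  have hc00 : c₀ ≠ 0 := by rintro rfl; rw [map_zero] at hc₀; exact hg20 hc₀
  exact hc₀ ▸ (isUnit_iff_ne_zero.mpr hc00).map
    (MvPolynomial.C : k →+* MvPolynomial (Fin 2) k)

end Main

end Stmt5Aux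

/-- Lemma 3.6. If `A` is a UFD, then `f(Z,T)` is either irreducible
in `k[Z,T]` or a unit. -/
theorem stmt5 (k : Type) [Field k] (m : ℕ) (α : MvPolynomial (Fin m) k)
    (f : MvPolynomial (Fin 2) k) (h : MvPolynomial (Fin 2) (MvPolynomial (Fin m) k))
    (hf : f ≠ 0)
    (hα : α ∉ Set.range (algebraMap k (MvPolynomial (Fin m) k)))
    (hdiv : ∀ p : MvPolynomial (Fin m) k, Prime p → p ∣ α → MvPolynomial.C p ∣ h)
    [IsDomain (Aring k m α f h)]
    (hufd : UniqueFactorizationMonoid (Aring k m α f h)) :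
    Irreducible f ∨ IsUnit f := by
  by_cases hfu : IsUnit f
  · exact Or.inr hfu
  left
  have hα0 : α ≠ 0 := fun h0 => hα ⟨0, by rw [map_zero, h0]⟩
  have hαu : ¬ IsUnit α := by
    intro hun
    obtain ⟨β, hβ⟩ := hun.exists_right_inv
    have h1 : α * β = MvPolynomial.C (1 : k) := by rw [map_one]; exact hβ
    obtain ⟨b, c, hb, -, -⟩ := Stmt5Aux.mv_const_of_mul_const m h1 one_ne_zero
    exact hα ⟨b, by rw [MvPolynomial.algebraMap_eq]; exact hb.symm⟩
  obtain ⟨p, hpi, hpd⟩ := WfDvdMonoid.exists_irreducible_factor hαu hα0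
  have hp : Prime p := UniqueFactorizationMonoid.irreducible_iff_prime.mp hpi
  refine ⟨hfu, fun g₁ g₂ hfg => ?_⟩
  have hprime := Stmt5Aux.prime_p k m α f h hα0 hf hfu hdiv hufd hp hpd
  obtain ⟨α', hα'⟩ := hpd
  obtain ⟨h₂, hh₂⟩ := hdiv p hp ⟨α', hα'⟩
  have hrel : Stmt5Aux.toA k m α f h (rename Fin.succ
        (MvPolynomial.map (algebraMap k (MvPolynomial (Fin m) k)) f))
      = Stmt5Aux.toA k m α f h (MvPolynomial.C p)
        * Stmt5Aux.toA k m α f h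
            (MvPolynomial.C α' * MvPolynomial.X 0 - rename Fin.succ h₂) := by
    rw [← map_mul, Stmt5Aux.toA_eq_iff]
    refine ⟨-1, ?_⟩
    simp only [HH]
    rw [hα', hh₂, map_mul, map_mul, rename_C]
    ring
  have hsplit : Stmt5Aux.toA k m α f h (rename Fin.succ
        (MvPolynomial.map (algebraMap k (MvPolynomial (Fin m) k)) f))
      = Stmt5Aux.toA k m α f h (rename Fin.succ
            (MvPolynomial.map (algebraMap k (MvPolynomial (Fin m) k)) g₁))
        * Stmt5Aux.toA k m α f h (rename Fin.succ
            (MvPolynomial.map (algebraMap k (MvPolynomial (Fin m) k)) g₂)) := by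
    rw [hfg, map_mul, map_mul, map_mul]
  have hpα : p ∣ α := ⟨α', hα'⟩
  rcases hprime.2.2 _ _ ⟨Stmt5Aux.toA k m α f h
      (MvPolynomial.C α' * MvPolynomial.X 0 - rename Fin.succ h₂),
      by rw [← hsplit]; exact hrel⟩ with hd | hd
  · exact Or.inr (Stmt5Aux.unit_of_dvd k m α f h hα0 hf hdiv hp hpα hfg hd)
  · exact Or.inl (Stmt5Aux.unit_of_dvd k m α f h hα0 hf hdiv hp hpα
      (by rw [hfg, mul_comm]) hd)
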